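/- Let x ∈ R^Σ be a strictly positive sequence-form strategy. Then the inverse of the Hessian of the dilated entropy DGF at x is given by (∇²ψ)(x)⁻¹ = Σ_{j∈J} Σ_{a∈A_j} (x ∘ u_{ja})(x ∘ u_{ja})ᵀ / (w_j x_{ja}), where u_{ja} ∈ {0,1}^Σ is the indicator of all sequences weakly below ja, and ∘ is the componentwise product. -/

import Mathlib

inductive TFT : Type where
  | term : TFT
  | dec : (n : ℕ) → (Fin n → TFT) → TFT
  | obs : (n : ℕ) → (Fin n → TFT) → TFT

namespace TFT

noncomputable def wt : TFT → ℝ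
  | term => 0
  | dec _ c => 2 + 2 * (List.ofFn fun i => wt (c i)).foldr max 0
  | obs _ c => ∑ i, wt (c i)

def Seq : TFT → Type
  | term => Empty
  | dec n c => Σ i : Fin n, Option (Seq (c i))
  | obs n c => Σ i : Fin n, Seq (c i)

instance seqFintype : (t : TFT) → Fintype (Seq t)
  | term => inferInstanceAs (Fintype Empty)
  | dec n c => by
      letI := fun i => seqFintype (c i)
      exact inferInstanceAs (Fintype (Σ i : Fin n, Option (Seq (c i))))
  | obs n c => by
      letI := fun i => seqFintype (c i)
      exact inferInstanceAs (Fintype (Σ i : Fin n, Seq (c i)))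

instance seqDecEq : (t : TFT) → DecidableEq (Seq t)
  | term => inferInstanceAs (DecidableEq Empty)
  | dec n c => by
      letI := fun i => seqDecEq (c i)
      exact inferInstanceAs (DecidableEq (Σ i : Fin n, Option (Seq (c i))))
  | obs n c => by
      letI := fun i => seqDecEq (c i)
      exact inferInstanceAs (DecidableEq (Σ i : Fin n, Seq (c i)))

def IsSF : (t : TFT) → (Seq t → ℝ) → ℝ → Prop
  | term, _, _ => True
  | dec _ c, x, par =>
      (∑ i, x ⟨i, none⟩) = par ∧
      ∀ i, IsSF (c i) (fun s => x ⟨i, some s⟩) (x ⟨i, none⟩)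
  | obs _ c, x, par => ∀ i, IsSF (c i) (fun s => x ⟨i, s⟩) par

noncomputable def decW : (t : TFT) → Seq t → ℝ
  | term => fun s => Empty.elim s
  | dec n c => fun σ => match σ with
      | ⟨_, none⟩ => wt (dec n c)
      | ⟨i, some s⟩ => decW (c i) s
  | obs _ c => fun σ => decW (c σ.1) σ.2

noncomputable def succW : (t : TFT) → Seq t → ℝ
  | term => fun s => Empty.elim s
  | dec _ c => fun σ => match σ with
      | ⟨i, none⟩ => wt (c i)
      | ⟨i, some s⟩ => succW (c i) s
  | obs _ c => fun σ => succW (c σ.1) σ.2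

def parent : (t : TFT) → Seq t → Option (Seq t)
  | term => fun s => Empty.elim s
  | dec _ c => fun σ => match σ with
      | ⟨_, none⟩ => none
      | ⟨i, some s⟩ =>
          some (match parent (c i) s with
            | none => ⟨i, none⟩
            | some q => ⟨i, some q⟩)
  | obs _ c => fun σ => (parent (c σ.1) σ.2).map fun q => ⟨σ.1, q⟩

noncomputable def u : (t : TFT) → Seq t → Seq t → ℝ
  | term => fun s => Empty.elim s
  | dec _ c => fun σ σ' => match σ, σ' with
      | ⟨i, none⟩, ⟨i', _⟩ => if i' = i then 1 else 0
      | ⟨_, some _⟩, ⟨_, none⟩ => 0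
      | ⟨i, some s⟩, ⟨i', some s'⟩ => if h : i' = i then u (c i) s (h ▸ s') else 0
  | obs _ c => fun σ σ' =>
      if h : σ'.1 = σ.1 then u (c σ.1) σ.2 (h ▸ σ'.2) else 0

/-- The Hessian of the dilated entropy DGF at a strictly positive sequence-form
strategy `x`, given entrywise. -/
noncomputable def hess (t : TFT) (x : Seq t → ℝ) : Matrix (Seq t) (Seq t) ℝ :=
  fun σ σ' =>
    if σ' = σ then (decW t σ + succW t σ) / x σ
    else if parent t σ' = some σ then -(decW t σ') / x σ
    else if parent t σ = some σ' then -(decW t σ) / x σ'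
    else 0

/-- The dilated entropy distance-generating function. -/
noncomputable def psi : (t : TFT) → (Seq t → ℝ) → ℝ → ℝ
  | term, _, _ => 0
  | dec n c, x, par =>
      wt (dec n c) *
          (par * Real.log n + ∑ i, x ⟨i, none⟩ * Real.log (x ⟨i, none⟩ / par)) +
        ∑ i, psi (c i) (fun s => x ⟨i, some s⟩) (x ⟨i, none⟩)
  | obs _ c, x, par => ∑ i, psi (c i) (fun s => x ⟨i, s⟩) par

/-- The strategy that randomizes uniformly at every decision point. -/
def IsUniform : (t : TFT) → (Seq t → ℝ) → ℝ → Prop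
  | term, _, _ => True
  | dec n c, x, par =>
      (∀ i : Fin n, x ⟨i, none⟩ = par / n) ∧
      ∀ i, IsUniform (c i) (fun s => x ⟨i, some s⟩) (x ⟨i, none⟩)
  | obs _ c, x, par => ∀ i, IsUniform (c i) (fun s => x ⟨i, s⟩) par

attribute [reducible] Seq

instance seqDecEqDec (n : ℕ) (c : Fin n → TFT) : DecidableEq (Seq (dec n c)) := seqDecEq (dec n c)

instance seqDecEqObs (n : ℕ) (c : Fin n → TFT) : DecidableEq (Seq (obs n c)) := seqDecEq (obs n c)

instance seqFintypeDec (n : ℕ) (c : Fin n → TFT) : Fintype (Seq (dec n c)) := seqFintype (dec n c)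

instance seqFintypeObs (n : ℕ) (c : Fin n → TFT) : Fintype (Seq (obs n c)) := seqFintype (obs n c)

variable {n : ℕ} {c : Fin n → TFT}

@[simp] lemma parent_dec_none (i : Fin n) :
    parent (dec n c) ⟨i, none⟩ = none := by simp [parent]

@[simp] lemma parent_dec_some (i : Fin n) (s : Seq (c i)) :
    parent (dec n c) ⟨i, some s⟩ =
      some ((parent (c i) s).elim ⟨i, none⟩ (fun q => ⟨i, some q⟩)) := by
  cases hp : parent (c i) s <;> simp [parent, hp]

@[simp] lemma parent_obs (i : Fin n) (s : Seq (c i)) :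
    parent (obs n c) ⟨i, s⟩ = (parent (c i) s).map (fun q => (⟨i, q⟩ : Seq (obs n c))) := by
  simp [parent]

@[simp] lemma decW_dec_none (i : Fin n) : decW (dec n c) ⟨i, none⟩ = wt (dec n c) := by
  simp [decW]

@[simp] lemma decW_dec_some (i : Fin n) (s : Seq (c i)) :
    decW (dec n c) ⟨i, some s⟩ = decW (c i) s := by simp [decW]

@[simp] lemma decW_obs (i : Fin n) (s : Seq (c i)) :
    decW (obs n c) ⟨i, s⟩ = decW (c i) s := by simp [decW]

@[simp] lemma succW_dec_none (i : Fin n) : succW (dec n c) ⟨i, none⟩ = wt (c i) := by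
  simp [succW]

@[simp] lemma succW_dec_some (i : Fin n) (s : Seq (c i)) :
    succW (dec n c) ⟨i, some s⟩ = succW (c i) s := by simp [succW]

@[simp] lemma succW_obs (i : Fin n) (s : Seq (c i)) :
    succW (obs n c) ⟨i, s⟩ = succW (c i) s := by simp [succW]

@[simp] lemma u_dec_none (i i' : Fin n) (o : Option (Seq (c i'))) :
    u (dec n c) ⟨i, none⟩ ⟨i', o⟩ = if i' = i then 1 else 0 := by simp [u]

@[simp] lemma u_dec_some_none (i i' : Fin n) (s : Seq (c i)) :
    u (dec n c) ⟨i, some s⟩ ⟨i', none⟩ = 0 := by simp [u]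

@[simp] lemma u_dec_some_some (i : Fin n) (s s' : Seq (c i)) :
    u (dec n c) ⟨i, some s⟩ ⟨i, some s'⟩ = u (c i) s s' := by simp [u]

@[simp] lemma u_dec_some_some_ne {i i' : Fin n} (h : i' ≠ i) (s : Seq (c i)) (s' : Seq (c i')) :
    u (dec n c) ⟨i, some s⟩ ⟨i', some s'⟩ = 0 := by simp [u, h]

@[simp] lemma u_obs_same (i : Fin n) (s s' : Seq (c i)) :
    u (obs n c) ⟨i, s⟩ ⟨i, s'⟩ = u (c i) s s' := by simp [u]

@[simp] lemma u_obs_ne {i i' : Fin n} (h : i' ≠ i) (s : Seq (c i)) (s' : Seq (c i')) :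
    u (obs n c) ⟨i, s⟩ ⟨i', s'⟩ = 0 := by simp [u, h]


private lemma foldr_max_nonneg (l : List ℝ) : 0 ≤ l.foldr max 0 := by
  induction l with
  | nil => simp
  | cons a l ih => exact le_max_of_le_right ih

private lemma sum_sigma_fin {m : ℕ} {β : Fin m → Type*} [∀ i, Fintype (β i)]
    (f : (Σ i, β i) → ℝ) :
    ∑ x : Σ i, β i, f x = ∑ i, ∑ b : β i, f ⟨i, b⟩ := by
  rw [← Finset.univ_sigma_univ, Finset.sum_sigma]

private lemma smk_inj {m : ℕ} {β : Fin m → Type*} {i : Fin m} {a b : β i}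
    (h : Sigma.mk i a = ⟨i, b⟩) : a = b := by
  simpa using h

private lemma sum_seq_dec {n : ℕ} {c : Fin n → TFT} (f : Seq (dec n c) → ℝ) :
    ∑ σ ∈ @Finset.univ _ (seqFintype (dec n c)), f σ = ∑ j, ∑ o : Option (Seq (c j)), f ⟨j, o⟩ := by
  have h : ∑ σ ∈ @Finset.univ _ (seqFintype (dec n c)), f σ = ∑ σ : Σ j, Option (Seq (c j)), f σ :=
    Finset.sum_congr (by congr 1) (fun _ _ => rfl)
  rw [h]; exact sum_sigma_fin _

private lemma sum_seq_obs {n : ℕ} {c : Fin n → TFT} (f : Seq (obs n c) → ℝ) :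
    ∑ σ ∈ @Finset.univ _ (seqFintype (obs n c)), f σ = ∑ j, ∑ r : Seq (c j), f ⟨j, r⟩ := by
  have h : ∑ σ ∈ @Finset.univ _ (seqFintype (obs n c)), f σ = ∑ σ : Σ j, Seq (c j), f σ :=
    Finset.sum_congr (by congr 1) (fun _ _ => rfl)
  rw [h]; exact sum_sigma_fin _

theorem decW_pos (t : TFT) : ∀ σ : Seq t, 0 < decW t σ := by
  induction t with
  | term => exact fun σ => σ.elim
  | dec n c ih =>
      rintro ⟨i, _ | s⟩
      · have h0 := foldr_max_nonneg (List.ofFn fun i => wt (c i))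
        rw [decW_dec_none, wt]
        linarith
      · rw [decW_dec_some]; exact ih i s
  | obs n c ih => rintro ⟨i, s⟩; rw [decW_obs]; exact ih i s

theorem parent_ne_self (t : TFT) : ∀ σ : Seq t, parent t σ ≠ some σ := by
  induction t with
  | term => exact fun σ => σ.elim
  | dec n c ih =>
      rintro ⟨i, _ | s⟩ h
      · simp at h
      · rw [parent_dec_some] at h
        cases hp : parent (c i) s with
        | none =>
            rw [hp] at h
            simp only [Option.elim, Option.some.injEq] at h
            exact absurd (smk_inj h) (by simp)
        | some q =>
            rw [hp] at h
            simp only [Option.elim, Option.some.injEq] at h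
            obtain rfl : q = s := by simpa using smk_inj h
            exact ih i _ hp
  | obs n c ih =>
      rintro ⟨i, s⟩ h
      rw [parent_obs, Option.map_eq_some_iff] at h
      obtain ⟨q, hq, h2⟩ := h
      obtain rfl : q = s := smk_inj h2
      exact ih i _ hq

theorem parent_asymm (t : TFT) :
    ∀ σ p : Seq t, parent t σ = some p → parent t p ≠ some σ := by
  induction t with
  | term => exact fun σ => σ.elim
  | dec n c ih =>
      rintro ⟨i, _ | s⟩ p h hcon
      · simp at h
      · rw [parent_dec_some, Option.some.injEq] at h
        subst h
        cases hp : parent (c i) s with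
        | none => rw [hp] at hcon; simp at hcon
        | some q =>
            rw [hp] at hcon
            simp only [Option.elim, parent_dec_some] at hcon
            cases hq : parent (c i) q with
            | none =>
                rw [hq] at hcon
                simp only [Option.elim, Option.some.injEq] at hcon
                exact absurd (smk_inj hcon) (by simp)
            | some r =>
                rw [hq] at hcon
                simp only [Option.elim, Option.some.injEq] at hcon
                obtain rfl : r = s := by simpa using smk_inj hcon
                exact ih i _ _ hp hq
  | obs n c ih =>
      rintro ⟨i, s⟩ p h hcon
      rw [parent_obs, Option.map_eq_some_iff] at h
      obtain ⟨q, hq, rfl⟩ := h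
      rw [parent_obs, Option.map_eq_some_iff] at hcon
      obtain ⟨r, hr, h2⟩ := hcon
      obtain rfl : r = s := smk_inj h2
      exact ih i _ _ hq hr


private lemma fst_eq {m : ℕ} {β : Fin m → Type*} {i i' : Fin m} {a : β i} {b : β i'}
    (h : Sigma.mk i a = ⟨i', b⟩) : i = i' := congrArg Sigma.fst h

theorem u_col (t : TFT) : ∀ τ σ : Seq t,
    u t τ σ = (if τ = σ then 1 else 0) + (parent t σ).elim 0 (fun p => u t τ p) := by
  induction t with
  | term => exact fun τ => τ.elim
  | dec n c ih =>
      rintro ⟨i, _ | s⟩ ⟨i', _ | s'⟩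
      · rw [u_dec_none, parent_dec_none]
        rcases eq_or_ne i' i with rfl | hne
        · simp
        · rw [if_neg hne, if_neg (fun hh => hne (fst_eq hh).symm)]; simp
      · rw [u_dec_none, parent_dec_some]
        rw [if_neg (fun hh : (⟨i, none⟩ : Seq (dec n c)) = ⟨i', some s'⟩ => by
          obtain rfl := fst_eq hh; exact absurd (smk_inj hh) (by simp))]
        cases hp : parent (c i') s' with
        | none => simp
        | some q => simp
      · rw [u_dec_some_none, parent_dec_none]
        rw [if_neg (fun hh : (⟨i, some s⟩ : Seq (dec n c)) = ⟨i', none⟩ => by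
          obtain rfl := fst_eq hh; exact absurd (smk_inj hh) (by simp))]
        simp
      · rw [parent_dec_some]
        rcases eq_or_ne i' i with rfl | hne
        · rw [u_dec_some_some]
          have hd : (if (⟨i', some s⟩ : Seq (dec n c)) = ⟨i', some s'⟩ then (1:ℝ) else 0)
              = if s = s' then 1 else 0 := by
            rcases eq_or_ne s s' with rfl | hss
            · simp
            · rw [if_neg (fun hh => hss (by simpa using smk_inj hh)), if_neg hss]
          erw [hd]; rw [ih i' s s']
          cases hp : parent (c i') s' with
          | none => simp
          | some q => simp
        · rw [u_dec_some_some_ne hne,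
            if_neg (fun hh : (⟨i, some s⟩ : Seq (dec n c)) = ⟨i', some s'⟩ =>
              hne (fst_eq hh).symm)]
          cases hp : parent (c i') s' with
          | none => simp [u_dec_some_none]
          | some q => simp [u_dec_some_some_ne hne]
  | obs n c ih =>
      rintro ⟨i, s⟩ ⟨i', s'⟩
      rw [parent_obs]
      rcases eq_or_ne i' i with rfl | hne
      · rw [u_obs_same]
        have hd : (if (⟨i', s⟩ : Seq (obs n c)) = ⟨i', s'⟩ then (1:ℝ) else 0)
            = if s = s' then 1 else 0 := by
          rcases eq_or_ne s s' with rfl | hss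
          · simp
          · rw [if_neg (fun hh => hss (smk_inj hh)), if_neg hss]
        erw [hd]; rw [ih i' s s']
        cases hp : parent (c i') s' with
        | none => simp
        | some q => simp
      · rw [u_obs_ne hne,
          if_neg (fun hh : (⟨i, s⟩ : Seq (obs n c)) = ⟨i', s'⟩ => hne (fst_eq hh).symm)]
        cases hp : parent (c i') s' with
        | none => simp
        | some q => simp [u_obs_ne hne]


theorem u_root_sum (t : TFT) : ∀ σ'' : Seq t,
    (∑ τ : Seq t, if parent t τ = none then u t τ σ'' else 0) = 1 := by
  induction t with
  | term => exact fun σ => σ.elim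
  | dec n c ih =>
      rintro ⟨i'', o''⟩
      rw [sum_seq_dec]
      have key : ∀ j : Fin n, (∑ o : Option (Seq (c j)),
          if parent (dec n c) ⟨j, o⟩ = none then u (dec n c) ⟨j, o⟩ ⟨i'', o''⟩ else 0)
          = if i'' = j then 1 else 0 := by
        intro j
        rw [Fintype.sum_option]
        have h1 : (if parent (dec n c) ⟨j, none⟩ = none
            then u (dec n c) ⟨j, none⟩ ⟨i'', o''⟩ else 0) = if i'' = j then 1 else 0 := by
          rw [parent_dec_none, if_pos rfl]
          cases o'' <;> rw [u_dec_none]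
        have h2 : ∀ s : Seq (c j), (if parent (dec n c) ⟨j, some s⟩ = none
            then u (dec n c) ⟨j, some s⟩ ⟨i'', o''⟩ else 0) = 0 := by
          intro s; rw [parent_dec_some]; simp
        rw [h1]
        simp only [h2]
        simp
      simp only [key]
      simp
  | obs n c ih =>
      rintro ⟨i'', s''⟩
      rw [sum_seq_obs]
      have key : ∀ j : Fin n, (∑ r : Seq (c j),
          if parent (obs n c) ⟨j, r⟩ = none then u (obs n c) ⟨j, r⟩ ⟨i'', s''⟩ else 0)
          = if i'' = j then 1 else 0 := by
        intro j
        rcases eq_or_ne i'' j with rfl | hne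
        · rw [if_pos rfl, ← ih i'' s'']
          apply Finset.sum_congr rfl
          intro r _
          simp only [parent_obs, Option.map_eq_none_iff, u_obs_same]
        · rw [if_neg hne]
          apply Finset.sum_eq_zero
          intro r _
          rw [u_obs_ne hne]
          simp
      simp only [key]
      simp


private lemma ne_of_fst_ne {m : ℕ} {β : Fin m → Type*} {i i' : Fin m} {a : β i} {b : β i'}
    (h : i ≠ i') : (Sigma.mk i a ≠ ⟨i', b⟩) := fun hh => h (fst_eq hh)

private lemma smk_ne_of_ne {m : ℕ} {β : Fin m → Type*} {i : Fin m} {a b : β i}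
    (h : a ≠ b) : Sigma.mk i a ≠ ⟨i, b⟩ := fun hh => h (smk_inj hh)

theorem u_row (t : TFT) : ∀ σ σ'' : Seq t,
    u t σ σ'' = (if σ'' = σ then 1 else 0) +
      ∑ τ : Seq t, (if parent t τ = some σ then u t τ σ'' else 0) := by
  induction t with
  | term => exact fun σ => σ.elim
  | dec n c ih =>
      rintro ⟨i, oσ⟩ ⟨i'', o''⟩
      rw [sum_seq_dec]
      have hnone : ∀ j : Fin n, (if parent (dec n c) ⟨j, none⟩ = some ⟨i, oσ⟩
          then u (dec n c) ⟨j, none⟩ ⟨i'', o''⟩ else 0) = 0 := by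
        intro j; rw [parent_dec_none]; simp
      simp only [Fintype.sum_option, hnone, zero_add]
      rw [Finset.sum_eq_single i (fun j _ hji => Finset.sum_eq_zero fun s _ => by
        rw [parent_dec_some]
        cases hp : parent (c j) s with
        | none => exact if_neg (fun hh => hji (fst_eq (Option.some_inj.mp hh)))
        | some q => exact if_neg (fun hh => hji (fst_eq (Option.some_inj.mp hh))))
        (fun h => absurd (Finset.mem_univ i) h)]
      cases oσ with
      | none =>
          have hterm : ∀ s : Seq (c i),
              (if parent (dec n c) ⟨i, some s⟩ = some (⟨i, none⟩ : Seq (dec n c))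
                then u (dec n c) ⟨i, some s⟩ ⟨i'', o''⟩ else 0)
              = (if parent (c i) s = none
                then u (dec n c) ⟨i, some s⟩ ⟨i'', o''⟩ else 0) := by
            intro s
            rw [parent_dec_some]
            cases hp : parent (c i) s with
            | none =>
                split_ifs with h1 h2
                · rfl
                · exact absurd rfl h2
                · exact absurd rfl h1
                · rfl
            | some q =>
                split_ifs with h1 h2 h3
                · rfl
                · exact absurd (smk_inj (Option.some_inj.mp h1) : some q = none) (by simp)
                · exact h3.elim
                · rfl
          simp only [hterm]
          cases o'' with
          | none =>
              rw [u_dec_none]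
              have hz : ∀ s : Seq (c i), (if parent (c i) s = none
                  then u (dec n c) ⟨i, some s⟩ (⟨i'', none⟩ : Seq (dec n c)) else 0) = 0 := by
                intro s; rw [u_dec_some_none]; simp
              simp only [hz, Finset.sum_const_zero, add_zero]
              rcases eq_or_ne i'' i with rfl | hne
              · rw [if_pos rfl, if_pos rfl]
              · rw [if_neg hne, if_neg (ne_of_fst_ne hne)]
          | some s'' =>
              rw [u_dec_none, if_neg (fun hh : (⟨i'', some s''⟩ : Seq (dec n c)) = ⟨i, none⟩ =>
                by obtain rfl := fst_eq hh; exact absurd (smk_inj hh) (by simp))]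
              rcases eq_or_ne i'' i with rfl | hne
              · rw [if_pos rfl, zero_add, ← u_root_sum (c i'') s'']
                apply Finset.sum_congr rfl
                intro s _
                rw [u_dec_some_some]
              · rw [if_neg hne, zero_add]
                symm
                apply Finset.sum_eq_zero
                intro s _
                rw [u_dec_some_some_ne hne]
                simp
      | some sσ =>
          have hterm : ∀ s : Seq (c i),
              (if parent (dec n c) ⟨i, some s⟩ = some (⟨i, some sσ⟩ : Seq (dec n c))
                then u (dec n c) ⟨i, some s⟩ ⟨i'', o''⟩ else 0)
              = (if parent (c i) s = some sσ
                then u (dec n c) ⟨i, some s⟩ ⟨i'', o''⟩ else 0) := by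
            intro s
            rw [parent_dec_some]
            cases hp : parent (c i) s with
            | none =>
                split_ifs with h1 h2 h3
                · rfl
                · exact absurd (smk_inj (Option.some_inj.mp h1) : none = some sσ) (by simp)
                · exact h3.elim
                · rfl
            | some q =>
                split_ifs with h1 h2 h3
                · rfl
                · exact absurd (smk_inj (Option.some_inj.mp h1) : some q = some sσ) h2
                · obtain rfl : q = sσ := Option.some_inj.mp h3
                  exact absurd rfl h1
                · rfl
          simp only [hterm]
          cases o'' with
          | none =>
              rw [u_dec_some_none, if_neg (fun hh : (⟨i'', none⟩ : Seq (dec n c)) = ⟨i, some sσ⟩ =>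
                by obtain rfl := fst_eq hh; exact absurd (smk_inj hh) (by simp))]
              rw [zero_add]
              symm
              apply Finset.sum_eq_zero
              intro s _
              rw [u_dec_some_none]
              simp
          | some s'' =>
              rcases eq_or_ne i'' i with rfl | hne
              · rw [u_dec_some_some]
                have hd : (if (⟨i'', some s''⟩ : Seq (dec n c)) = ⟨i'', some sσ⟩ then (1:ℝ) else 0)
                    = if s'' = sσ then 1 else 0 := by
                  rcases eq_or_ne s'' sσ with rfl | hss
                  · simp
                  · rw [if_neg (smk_ne_of_ne (by simpa using hss)), if_neg hss]
                erw [hd]; rw [ih i'' sσ s'']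
                congr 1
                apply Finset.sum_congr rfl
                intro s _
                rw [u_dec_some_some]
              · rw [u_dec_some_some_ne hne, if_neg (ne_of_fst_ne hne), zero_add]
                symm
                apply Finset.sum_eq_zero
                intro s _
                rw [u_dec_some_some_ne hne]
                simp
  | obs n c ih =>
      rintro ⟨i, sσ⟩ ⟨i'', s''⟩
      rw [sum_seq_obs]
      rw [Finset.sum_eq_single i (fun j _ hji => Finset.sum_eq_zero fun r _ => by
        rw [parent_obs]
        cases hp : parent (c j) r with
        | none => exact if_neg (fun hh => absurd hh (by simp))
        | some q => exact if_neg (fun hh => hji (fst_eq (Option.some_inj.mp hh))))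
        (fun h => absurd (Finset.mem_univ i) h)]
      have hterm : ∀ r : Seq (c i),
          (if parent (obs n c) ⟨i, r⟩ = some (⟨i, sσ⟩ : Seq (obs n c))
            then u (obs n c) ⟨i, r⟩ ⟨i'', s''⟩ else 0)
          = (if parent (c i) r = some sσ
            then u (obs n c) ⟨i, r⟩ ⟨i'', s''⟩ else 0) := by
        intro r
        rw [parent_obs]
        cases hp : parent (c i) r with
        | none =>
            split_ifs with h1 h2 h3
            · rfl
            · exact absurd h1 (by simp)
            · exact h3.elim
            · rfl
        | some q =>
            split_ifs with h1 h2 h3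
            · rfl
            · exact absurd (congrArg some (smk_inj (Option.some_inj.mp h1) : q = sσ)) h2
            · obtain rfl : q = sσ := Option.some_inj.mp h3
              exact absurd rfl h1
            · rfl
      simp only [hterm]
      rcases eq_or_ne i'' i with rfl | hne
      · rw [u_obs_same]
        have hd : (if (⟨i'', s''⟩ : Seq (obs n c)) = ⟨i'', sσ⟩ then (1:ℝ) else 0)
            = if s'' = sσ then 1 else 0 := by
          rcases eq_or_ne s'' sσ with rfl | hss
          · simp
          · rw [if_neg (smk_ne_of_ne hss), if_neg hss]
        erw [hd]; rw [ih i'' sσ s'']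
        congr 1
        apply Finset.sum_congr rfl
        intro r _
        rw [u_obs_same]
      · rw [u_obs_ne hne, if_neg (ne_of_fst_ne hne), zero_add]
        symm
        apply Finset.sum_eq_zero
        intro r _
        rw [u_obs_ne hne]
        simp


private lemma parent_dec_cond_none {n : ℕ} {c : Fin n → TFT} (i : Fin n) (s : Seq (c i)) :
    (parent (dec n c) ⟨i, some s⟩ = some (⟨i, none⟩ : Seq (dec n c)))
      ↔ parent (c i) s = none := by
  rw [parent_dec_some]
  cases hp : parent (c i) s with
  | none => exact iff_of_true rfl rfl
  | some q =>
      exact iff_of_false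
        (fun hh => absurd (smk_inj (Option.some_inj.mp hh) : some q = none) (by simp))
        (by simp)

private lemma parent_dec_cond_some {n : ℕ} {c : Fin n → TFT} (i : Fin n) (s sσ : Seq (c i)) :
    (parent (dec n c) ⟨i, some s⟩ = some (⟨i, some sσ⟩ : Seq (dec n c)))
      ↔ parent (c i) s = some sσ := by
  rw [parent_dec_some]
  cases hp : parent (c i) s with
  | none =>
      exact iff_of_false
        (fun hh => absurd (smk_inj (Option.some_inj.mp hh) : none = some sσ) (by simp))
        (by simp)
  | some q =>
      constructor
      · intro hh
        exact (smk_inj (Option.some_inj.mp hh) : some q = some sσ)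
      · intro hh
        obtain rfl := Option.some_inj.mp hh
        rfl

private lemma parent_obs_cond {n : ℕ} {c : Fin n → TFT} (i : Fin n) (r sσ : Seq (c i)) :
    (parent (obs n c) ⟨i, r⟩ = some (⟨i, sσ⟩ : Seq (obs n c)))
      ↔ parent (c i) r = some sσ := by
  rw [parent_obs]
  cases hp : parent (c i) r with
  | none => exact iff_of_false (fun hh => absurd hh (by simp)) (by simp)
  | some q =>
      constructor
      · intro hh
        exact congrArg some (smk_inj (Option.some_inj.mp hh) : q = sσ)
      · intro hh
        obtain rfl := Option.some_inj.mp hh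
        rfl

theorem root_weight (t : TFT) : ∀ (x : Seq t → ℝ) (par : ℝ), IsSF t x par →
    (∑ σ : Seq t, if parent t σ = none then decW t σ * x σ else 0) = wt t * par := by
  induction t with
  | term =>
      intro x par _
      rw [Finset.sum_eq_zero (fun σ _ => σ.elim)]
      simp [wt]
  | dec n c ih =>
      intro x par hsf
      obtain ⟨hsum, hch⟩ := hsf
      rw [sum_seq_dec]
      have key : ∀ j : Fin n, (∑ o : Option (Seq (c j)), if parent (dec n c) ⟨j, o⟩ = none
          then decW (dec n c) ⟨j, o⟩ * x ⟨j, o⟩ else 0) = wt (dec n c) * x ⟨j, none⟩ := by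
        intro j
        rw [Fintype.sum_option, parent_dec_none, if_pos rfl, decW_dec_none]
        rw [Finset.sum_eq_zero (fun s _ => by rw [parent_dec_some]; simp), add_zero]
      simp only [key]
      rw [← Finset.mul_sum, hsum]
  | obs n c ih =>
      intro x par hsf
      rw [sum_seq_obs]
      have key : ∀ j : Fin n, (∑ r : Seq (c j), if parent (obs n c) ⟨j, r⟩ = none
          then decW (obs n c) ⟨j, r⟩ * x ⟨j, r⟩ else 0) = wt (c j) * par := by
        intro j
        rw [← ih j (fun r => x ⟨j, r⟩) par (hsf j)]
        apply Finset.sum_congr rfl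
        intro r _
        simp only [parent_obs, Option.map_eq_none_iff, decW_obs]
      simp only [key]
      rw [← Finset.sum_mul]
      congr 1

theorem succW_sum (t : TFT) : ∀ (x : Seq t → ℝ) (par : ℝ), IsSF t x par → ∀ σ : Seq t,
    (∑ σ' : Seq t, if parent t σ' = some σ then decW t σ' * x σ' else 0)
      = succW t σ * x σ := by
  induction t with
  | term => intro x par _ σ; exact σ.elim
  | dec n c ih =>
      intro x par hsf
      obtain ⟨hsum, hch⟩ := hsf
      rintro ⟨i, oσ⟩
      rw [sum_seq_dec]
      have hnone : ∀ j : Fin n, (if parent (dec n c) ⟨j, none⟩ = some ⟨i, oσ⟩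
          then decW (dec n c) ⟨j, none⟩ * x ⟨j, none⟩ else 0) = 0 := by
        intro j; rw [parent_dec_none]; simp
      simp only [Fintype.sum_option, hnone, zero_add]
      rw [Finset.sum_eq_single i (fun j _ hji => Finset.sum_eq_zero fun s _ => by
        rw [parent_dec_some]
        cases hp : parent (c j) s with
        | none => exact if_neg (fun hh => hji (fst_eq (Option.some_inj.mp hh)))
        | some q => exact if_neg (fun hh => hji (fst_eq (Option.some_inj.mp hh))))
        (fun h => absurd (Finset.mem_univ i) h)]
      cases oσ with
      | none =>
          rw [Finset.sum_congr rfl (fun s _ => if_congr (parent_dec_cond_none i s) rfl rfl)]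
          simp only [decW_dec_some, succW_dec_none]
          exact root_weight (c i) _ _ (hch i)
      | some sσ =>
          rw [Finset.sum_congr rfl (fun s _ => if_congr (parent_dec_cond_some i s sσ) rfl rfl)]
          simp only [decW_dec_some, succW_dec_some]
          exact ih i _ _ (hch i) sσ
  | obs n c ih =>
      intro x par hsf
      rintro ⟨i, sσ⟩
      rw [sum_seq_obs]
      rw [Finset.sum_eq_single i (fun j _ hji => Finset.sum_eq_zero fun r _ => by
        rw [parent_obs]
        cases hp : parent (c j) r with
        | none => exact if_neg (fun hh => absurd hh (by simp))
        | some q => exact if_neg (fun hh => hji (fst_eq (Option.some_inj.mp hh))))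
        (fun h => absurd (Finset.mem_univ i) h)]
      rw [Finset.sum_congr rfl (fun r _ => if_congr (parent_obs_cond i r sσ) rfl rfl)]
      simp only [decW_obs, succW_obs]
      exact ih i _ _ (hsf i) sσ


open Matrix in
/-- The inverse of the Hessian of the dilated entropy DGF at a strictly positive
sequence-form strategy `x` is the dyadic sum
`Σ_{ja} (x ∘ u_{ja})(x ∘ u_{ja})ᵀ / (w_j x_{ja})`. -/
theorem inv_hess_eq_dyadic_sum (t : TFT) (x : Seq t → ℝ)
    (hpos : ∀ σ, 0 < x σ) (hsf : IsSF t x 1) :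
    hess t x *
        (∑ σ : Seq t, ((decW t σ * x σ)⁻¹) •
          Matrix.vecMulVec (fun σ' => x σ' * u t σ σ') (fun σ' => x σ' * u t σ σ')) = 1 ∧
      (∑ σ : Seq t, ((decW t σ * x σ)⁻¹) •
          Matrix.vecMulVec (fun σ' => x σ' * u t σ σ') (fun σ' => x σ' * u t σ σ')) *
        hess t x = 1 := by
  have hx : ∀ σ, x σ ≠ 0 := fun σ => (hpos σ).ne'
  have hw : ∀ σ, decW t σ ≠ 0 := fun σ => (decW_pos t σ).ne'
  have hM : ∀ σ' σ'' : Seq t,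
      (∑ σ : Seq t, ((decW t σ * x σ)⁻¹) •
        Matrix.vecMulVec (fun σ' => x σ' * u t σ σ') (fun σ' => x σ' * u t σ σ')) σ' σ''
      = ∑ τ : Seq t, (decW t τ * x τ)⁻¹ * ((x σ' * u t τ σ') * (x σ'' * u t τ σ'')) := by
    intro σ' σ''
    rw [Matrix.sum_apply]
    apply Finset.sum_congr rfl
    intro τ _
    rw [Matrix.smul_apply, Matrix.vecMulVec_apply, smul_eq_mul]
  -- the key row computation
  have hS : ∀ σ τ : Seq t, (∑ σ' : Seq t, hess t x σ σ' * (x σ' * u t τ σ'))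
      = (if τ = σ then decW t σ else 0)
        - (if parent t τ = some σ then decW t τ * x τ / x σ else 0) := by
    intro σ τ
    have hsplit : ∀ σ' : Seq t, hess t x σ σ' * (x σ' * u t τ σ')
        = (if σ' = σ then (decW t σ + succW t σ) * u t τ σ else 0)
          + (if parent t σ' = some σ then -((decW t σ' * x σ') * u t τ σ') / x σ else 0)
          + (if parent t σ = some σ' then -(decW t σ) * u t τ σ' else 0) := by
      intro σ'
      show (if σ' = σ then (decW t σ + succW t σ) / x σ
        else if parent t σ' = some σ then -(decW t σ') / x σ
        else if parent t σ = some σ' then -(decW t σ) / x σ'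
        else 0) * (x σ' * u t τ σ') = _
      by_cases h1 : σ' = σ
      · subst h1
        rw [if_pos rfl, if_pos rfl, if_neg (parent_ne_self t σ'), if_neg (parent_ne_self t σ'),
          add_zero, add_zero]
        rw [div_mul_eq_mul_div, mul_div_assoc]
        congr 1
        exact mul_div_cancel_left₀ _ (hx σ')
      · rw [if_neg h1, if_neg h1]
        by_cases h2 : parent t σ' = some σ
        · rw [if_pos h2, if_pos h2, if_neg (parent_asymm t σ' σ h2), add_zero, zero_add]
          ring
        · rw [if_neg h2, if_neg h2, zero_add, zero_add]
          by_cases h3 : parent t σ = some σ'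
          · rw [if_pos h3, if_pos h3]
            rw [div_mul_eq_mul_div, mul_div_assoc]
            congr 1
            exact mul_div_cancel_left₀ _ (hx σ')
          · rw [if_neg h3, if_neg h3, zero_mul]
    rw [Finset.sum_congr rfl fun σ' _ => hsplit σ',
      Finset.sum_add_distrib, Finset.sum_add_distrib]
    have e1 : (∑ σ' : Seq t, if σ' = σ then (decW t σ + succW t σ) * u t τ σ else 0)
        = (decW t σ + succW t σ) * u t τ σ := by
      simp
    have e2 : (∑ σ' : Seq t,
        if parent t σ' = some σ then -((decW t σ' * x σ') * u t τ σ') / x σ else 0)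
        = -(((if parent t τ = some σ then decW t τ * x τ else 0)
            + succW t σ * x σ * u t τ σ) / x σ) := by
      have expand : ∀ σ' : Seq t,
          (if parent t σ' = some σ then -((decW t σ' * x σ') * u t τ σ') / x σ else 0)
          = -(((if parent t σ' = some σ then decW t σ' * x σ' * (if τ = σ' then 1 else 0) else 0)
              + (if parent t σ' = some σ then decW t σ' * x σ' else 0) * u t τ σ) / x σ) := by
        intro σ'
        by_cases h2 : parent t σ' = some σ
        · rw [if_pos h2, if_pos h2, if_pos h2]
          have := u_col t τ σ'
          rw [h2] at this
          simp only [Option.elim] at this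
          rw [this]
          ring
        · rw [if_neg h2, if_neg h2, if_neg h2]
          simp
      rw [Finset.sum_congr rfl fun σ' _ => expand σ']
      rw [Finset.sum_neg_distrib]
      congr 1
      rw [← Finset.sum_div]
      congr 1
      rw [Finset.sum_add_distrib, ← Finset.sum_mul]
      congr 1
      · rw [Finset.sum_eq_single τ]
        · rcases eq_or_ne (parent t τ) (some σ) with hp | hp
          · rw [if_pos hp, if_pos hp, if_pos rfl, mul_one]
          · rw [if_neg hp, if_neg hp]
        · intro σ' _ hne
          split_ifs with hpar hττ
          · exact absurd hττ.symm hne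
          · exact mul_zero _
          · rfl
        · intro h; exact absurd (Finset.mem_univ τ) h
      · rw [succW_sum t x 1 hsf σ]
    have e3 : (∑ σ' : Seq t, if parent t σ = some σ' then -(decW t σ) * u t τ σ' else 0)
        = -(decW t σ) * (u t τ σ - (if τ = σ then 1 else 0)) := by
      cases hp : parent t σ with
      | none =>
          rw [Finset.sum_eq_zero (fun σ' _ => by simp)]
          have hcol := u_col t τ σ
          rw [hp] at hcol
          simp only [Option.elim] at hcol
          rw [hcol]
          ring
      | some p =>
          rw [Finset.sum_eq_single p
            (fun σ' _ hne => if_neg (fun hh => hne (Option.some_inj.mp hh).symm))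
            (fun h => absurd (Finset.mem_univ p) h)]
          rw [if_pos rfl]
          have hcol := u_col t τ σ
          rw [hp] at hcol
          simp only [Option.elim] at hcol
          rw [hcol]
          ring
    rw [e1, e2, e3]
    have hcanc : succW t σ * x σ * u t τ σ / x σ = succW t σ * u t τ σ := by
      rw [mul_right_comm, mul_div_assoc, div_self (hx σ), mul_one]
    rw [add_div, hcanc]
    split_ifs with h1 h2 h3
    · exact absurd (h2 ▸ h1) (parent_ne_self t σ)
    · ring
    · ring
    · ring
  -- main computation
  have key : hess t x *
      (∑ σ : Seq t, ((decW t σ * x σ)⁻¹) •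
        Matrix.vecMulVec (fun σ' => x σ' * u t σ σ') (fun σ' => x σ' * u t σ σ')) = 1 := by
    ext σ σ''
    rw [Matrix.mul_apply]
    rw [Finset.sum_congr rfl fun σ' _ => by rw [hM σ' σ'', Finset.mul_sum]]
    rw [Finset.sum_comm]
    rw [Finset.sum_congr rfl fun τ _ => show
        (∑ σ' : Seq t, hess t x σ σ' * ((decW t τ * x τ)⁻¹ * ((x σ' * u t τ σ') * (x σ'' * u t τ σ''))))
        = (decW t τ * x τ)⁻¹ * (x σ'' * u t τ σ'')
            * ((if τ = σ then decW t σ else 0)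
              - (if parent t τ = some σ then decW t τ * x τ / x σ else 0)) from by
      rw [← hS σ τ, Finset.mul_sum]
      apply Finset.sum_congr rfl
      intros
      ring]
    have expand : ∀ τ : Seq t, (decW t τ * x τ)⁻¹ * (x σ'' * u t τ σ'')
            * ((if τ = σ then decW t σ else 0)
              - (if parent t τ = some σ then decW t τ * x τ / x σ else 0))
        = (if τ = σ then (x σ'' * u t σ σ'') / x σ else 0)
          - (if parent t τ = some σ then (x σ'' / x σ) * u t τ σ'' else 0) := by
      intro τ
      split_ifs with h1 h2 h2
      · exact absurd (h1 ▸ h2) (parent_ne_self t σ)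
      · subst h1
        field_simp
        rw [sub_zero, sub_zero, mul_comm (decW t τ) (x τ), mul_div_mul_right _ _ (hw τ)]
      · field_simp [hw τ, hx τ, hx σ]
        ring
      · ring
    rw [Finset.sum_congr rfl fun τ _ => expand τ, Finset.sum_sub_distrib]
    have p1 : (∑ τ : Seq t, if τ = σ then (x σ'' * u t σ σ'') / x σ else 0)
        = (x σ'' * u t σ σ'') / x σ := by simp
    have p2 : (∑ τ : Seq t, if parent t τ = some σ then (x σ'' / x σ) * u t τ σ'' else 0)
        = (x σ'' / x σ) * (u t σ σ'' - (if σ'' = σ then 1 else 0)) := by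
      have : ∀ τ : Seq t, (if parent t τ = some σ then (x σ'' / x σ) * u t τ σ'' else 0)
          = (x σ'' / x σ) * (if parent t τ = some σ then u t τ σ'' else 0) := by
        intro τ; split_ifs <;> simp
      rw [Finset.sum_congr rfl fun τ _ => this τ, ← Finset.mul_sum]
      congr 1
      have := u_row t σ σ''
      linarith [u_row t σ σ'']
    rw [p1, p2, Matrix.one_apply]
    split_ifs with h1 h2 h3
    · obtain rfl := h1
      field_simp
      rw [show x σ'' * (u t σ'' σ'' - (u t σ'' σ'' - 1)) = x σ'' from by ring,
        div_self (hx σ'')]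
    · exact absurd h1.symm h2
    · exact absurd h3.symm h1
    · ring
  exact ⟨key, mul_eq_one_comm.mp key⟩

end TFT
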